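/- arXiv:1107.1173 — 3 statements merged into one kernel-verified Lean document; each statement's English description precedes it below -/
import Mathlib

section
/- Let r ≥ 1, let c : ℤ^r × {1,...,r} → ℤ, and fix i ∈ {1,...,r}. Define p_i(v) = (-1)^r · ∑_{J ⊆ {1,...,r}, i ∈ J} (-1)^{|J|} · c(v + 1 - 1_J, i). Suppose that for every v, c(v) := ∑_{j=0}^{r-1} c(v + 1_{{i_1,...,i_j}}, i_{j+1}) for every ordering (i_1,...,i_r) of {1,...,r} (additivity along flags). Then the Poincaré coefficient p'(v) = (-1)^r ∑_{J ⊆ I} (-1)^{|J|} c(v - 1_J) satisfies p'(v) = -p_i(v) + p_i(v - 1), where 1 = (1,...,1). -/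
/-- Indicator vector of a subset `J ⊆ {1,…,r}`. -/
def indVec {r : ℕ} (J : Finset (Fin r)) : Fin r → ℤ := fun i => if i ∈ J then 1 else 0

open Finset

private lemma indVec_insert_not_mem {r : ℕ} {i : Fin r} {K : Finset (Fin r)} (h : i ∉ K) :
    indVec (insert i K) = indVec K + indVec {i} := by
  funext x
  simp only [indVec, Pi.add_apply, mem_insert, mem_singleton]
  by_cases hx : x = i
  · subst hx; simp [h]
  · simp [hx]

private lemma key_step {n : ℕ} (c : (Fin (n+1) → ℤ) → Fin (n+1) → ℤ)
    (cTot : (Fin (n+1) → ℤ) → ℤ) (i : Fin (n+1))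
    (hflag : ∀ (v : Fin (n+1) → ℤ) (σ : Equiv.Perm (Fin (n+1))),
      cTot v = ∑ j : Fin (n+1),
        c (v + indVec ((Finset.univ.filter (fun k : Fin (n+1) => k < j)).image σ)) (σ j))
    (w : Fin (n+1) → ℤ) :
    cTot w - cTot (w - indVec {i}) =
      c (w + indVec (Finset.univ.erase i)) i - c (w - indVec {i}) i := by
  set σ : Equiv.Perm (Fin (n+1)) := Equiv.swap i (Fin.last n) with hσ
  set ρ : Equiv.Perm (Fin (n+1)) := (finRotate (n+1))⁻¹ with hρ
  have hρ_eq : ∀ x : Fin (n+1), ρ (x + 1) = x := by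
    intro x
    rw [hρ]
    have h : finRotate (n+1) x = x + 1 := finRotate_succ_apply x
    rw [Equiv.Perm.inv_eq_iff_eq]
    exact h.symm
  have hρ0 : ρ 0 = Fin.last n := by
    have := hρ_eq (Fin.last n)
    rwa [Fin.last_add_one] at this
  have hρval : ∀ j : Fin (n+1), j ≠ 0 → (ρ j : ℕ) + 1 = (j : ℕ) := by
    intro j hj
    have h1 : finRotate (n+1) (ρ j) = j := by rw [hρ]; simp
    rw [finRotate_succ_apply] at h1
    have hne : ρ j ≠ Fin.last n := by
      intro h
      rw [h, Fin.last_add_one] at h1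
      exact hj h1.symm
    have := Fin.val_add_one (ρ j)
    rw [if_neg hne] at this
    rw [← this, h1]
  have himg : ∀ j : Fin (n+1), j ≠ 0 →
      (univ.filter (fun k : Fin (n+1) => k < j)).image ρ
        = insert (Fin.last n) (univ.filter (fun k : Fin (n+1) => k < ρ j)) := by
    intro j hj
    ext x
    simp only [mem_image, mem_filter, mem_insert, mem_univ, true_and]
    constructor
    · rintro ⟨k, hk, rfl⟩
      by_cases hk0 : k = 0
      · subst hk0; left; exact hρ0
      · right
        have h1 := hρval k hk0
        have h2 := hρval j hj
        rw [Fin.lt_def] at hk ⊢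
        omega
    · rintro (rfl | hx)
      · refine ⟨0, ?_, hρ0⟩
        exact Fin.pos_iff_ne_zero.mpr hj
      · refine ⟨x + 1, ?_, hρ_eq x⟩
        have h2 := hρval j hj
        have hxlt : (x : ℕ) < (ρ j : ℕ) := Fin.lt_def.mp hx
        have hxne : x ≠ Fin.last n := by
          intro h
          have := (ρ j).isLt
          rw [h] at hxlt
          simp [Fin.last] at hxlt
          omega
        have := Fin.val_add_one x
        rw [if_neg hxne] at this
        rw [Fin.lt_def, this]
        omega
  have h1 : cTot w = ∑ j : Fin (n+1),
      c (w + indVec ((univ.filter (fun k : Fin (n+1) => k < ρ j)).image σ)) (σ (ρ j)) := by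
    rw [hflag w σ]
    exact (Equiv.sum_comp ρ (fun j => c (w + indVec ((univ.filter
      (fun k : Fin (n+1) => k < j)).image σ)) (σ j))).symm
  have h2 : cTot (w - indVec {i}) = ∑ j : Fin (n+1),
      c ((w - indVec {i}) + indVec ((univ.filter (fun k : Fin (n+1) => k < j)).image
        (ρ.trans σ))) (σ (ρ j)) := by
    rw [hflag (w - indVec {i}) (ρ.trans σ)]
    rfl
  rw [h1, h2, ← Finset.sum_sub_distrib]
  rw [Finset.sum_eq_single (0 : Fin (n+1))]
  · -- the j = 0 term
    have hf0 : (univ.filter (fun k : Fin (n+1) => k < (0 : Fin (n+1)))) = ∅ := by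
      ext x; simp [Fin.not_lt_zero]
    have hflast : (univ.filter (fun k : Fin (n+1) => k < Fin.last n))
        = univ.erase (Fin.last n) := by
      ext x; simp [Fin.lt_last_iff_ne_last]
    have hσlast : σ (Fin.last n) = i := Equiv.swap_apply_right i (Fin.last n)
    have himage : (univ.erase (Fin.last n)).image σ = univ.erase i := by
      rw [Finset.image_erase σ.injective, Finset.image_univ_equiv, hσlast]
    have hempty : indVec (∅ : Finset (Fin (n+1))) = 0 := by
      funext x; simp [indVec]
    simp only [hρ0, hσlast, hflast, hf0, himage]
    simp [hempty]
  · intro j _ hj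
    have harg : ((univ.filter (fun k : Fin (n+1) => k < j)).image ⇑(ρ.trans σ))
        = insert i ((univ.filter (fun k : Fin (n+1) => k < ρ j)).image σ) := by
      have : ((univ.filter (fun k : Fin (n+1) => k < j)).image ⇑(ρ.trans σ))
          = ((univ.filter (fun k : Fin (n+1) => k < j)).image ρ).image σ := by
        rw [Finset.image_image]; rfl
      rw [this, himg j hj, Finset.image_insert,
        Equiv.swap_apply_right i (Fin.last n)]
    have hnotmem : i ∉ (univ.filter (fun k : Fin (n+1) => k < ρ j)).image σ := by
      intro hmem
      rw [mem_image] at hmem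
      obtain ⟨k, hk, hki⟩ := hmem
      have : k = Fin.last n := σ.injective (by
        rw [hki, Equiv.swap_apply_right i (Fin.last n)])
      subst this
      rw [mem_filter] at hk
      exact absurd hk.2 (not_lt_of_ge (Fin.le_last _))
    have : (w - indVec {i}) + indVec (((univ.filter
        (fun k : Fin (n+1) => k < j)).image ⇑(ρ.trans σ)))
        = w + indVec ((univ.filter (fun k : Fin (n+1) => k < ρ j)).image σ) := by
      rw [harg, indVec_insert_not_mem hnotmem]
      abel
    rw [this, sub_self]
  · intro h
    exact absurd (mem_univ (0 : Fin (n+1))) h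

/-- Abstract version of `(t_1⋯t_r - 1)·P_i(t) = P'(t)`: if `c (v, i)` satisfies the flag
additivity `c(v) = ∑_{j=0}^{r-1} c(v + 1_{{i_1,…,i_j}}, i_{j+1})` for every ordering
`(i_1,…,i_r)` of `{1,…,r}`, then the coefficients
`p'(v) = (-1)^r ∑_{J ⊆ I} (-1)^{|J|} c(v - 1_J)` and
`p_i(v) = (-1)^r ∑_{J ∋ i} (-1)^{|J|} c(v + 1 - 1_J, i)` satisfy
`p'(v) = -p_i(v) + p_i(v - 1)`. -/
theorem pprime_eq_neg_pi_add_pi_shift (r : ℕ) (hr : 1 ≤ r)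
    (c : (Fin r → ℤ) → Fin r → ℤ) (cTot : (Fin r → ℤ) → ℤ) (i : Fin r)
    (hflag : ∀ (v : Fin r → ℤ) (σ : Equiv.Perm (Fin r)),
      cTot v = ∑ j : Fin r,
        c (v + indVec ((Finset.univ.filter (fun k : Fin r => k < j)).image σ)) (σ j))
    (v : Fin r → ℤ) :
    (-1 : ℤ) ^ r *
        ∑ J ∈ (Finset.univ : Finset (Fin r)).powerset,
          (-1 : ℤ) ^ J.card * cTot (v - indVec J)
      = -((-1 : ℤ) ^ r *
            ∑ J ∈ ((Finset.univ : Finset (Fin r)).powerset).filter (fun J => i ∈ J),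
              (-1 : ℤ) ^ J.card * c (v + 1 - indVec J) i)
        + ((-1 : ℤ) ^ r *
            ∑ J ∈ ((Finset.univ : Finset (Fin r)).powerset).filter (fun J => i ∈ J),
              (-1 : ℤ) ^ J.card * c ((v - 1) + 1 - indVec J) i) := by
  obtain ⟨n, rfl⟩ : ∃ n, r = n + 1 := ⟨r - 1, by omega⟩
  have key := key_step c cTot i hflag
  -- reindex sums over J ∋ i by K = J.erase i over powerset of univ.erase i
  have hbij : ∀ g : Finset (Fin (n+1)) → ℤ,
      ∑ J ∈ ((univ : Finset (Fin (n+1))).powerset).filter (fun J => i ∈ J), g J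
        = ∑ K ∈ ((univ : Finset (Fin (n+1))).erase i).powerset, g (insert i K) := by
    intro g
    refine Finset.sum_bij' (fun J _ => J.erase i) (fun K _ => insert i K)
      ?_ ?_ ?_ ?_ ?_
    · intro J hJ
      simp only [mem_filter, mem_powerset] at hJ
      simp only [mem_powerset]
      intro x hx
      rw [mem_erase] at hx ⊢
      exact ⟨hx.1, mem_univ x⟩
    · intro K hK
      simp only [mem_powerset] at hK
      simp only [mem_filter, mem_powerset]
      exact ⟨subset_univ _, mem_insert_self i K⟩
    · intro J hJ
      simp only [mem_filter, mem_powerset] at hJ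
      exact Finset.insert_erase hJ.2
    · intro K hK
      simp only [mem_powerset] at hK
      refine Finset.erase_insert (fun hi => ?_)
      exact absurd (hK hi) (fun h => (mem_erase.mp h).1 rfl)
    · intro J hJ
      simp only [mem_filter, mem_powerset] at hJ
      rw [Finset.insert_erase hJ.2]
  have hsplit : ((univ : Finset (Fin (n+1))).powerset).filter (fun J => i ∉ J)
      = ((univ : Finset (Fin (n+1))).erase i).powerset := by
    ext J
    simp [Finset.subset_erase]
  -- main sum identity
  have hmain : ∑ J ∈ (univ : Finset (Fin (n+1))).powerset,
      (-1 : ℤ) ^ J.card * cTot (v - indVec J)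
      = (∑ J ∈ ((univ : Finset (Fin (n+1))).powerset).filter (fun J => i ∈ J),
          (-1 : ℤ) ^ J.card * c ((v - 1) + 1 - indVec J) i)
        - ∑ J ∈ ((univ : Finset (Fin (n+1))).powerset).filter (fun J => i ∈ J),
          (-1 : ℤ) ^ J.card * c (v + 1 - indVec J) i := by
    rw [← Finset.sum_filter_add_sum_filter_not
      ((univ : Finset (Fin (n+1))).powerset) (fun J => i ∈ J), hsplit,
      hbij (fun J => (-1 : ℤ) ^ J.card * cTot (v - indVec J)),
      hbij (fun J => (-1 : ℤ) ^ J.card * c ((v - 1) + 1 - indVec J) i),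
      hbij (fun J => (-1 : ℤ) ^ J.card * c (v + 1 - indVec J) i),
      ← Finset.sum_add_distrib, ← Finset.sum_sub_distrib]
    apply Finset.sum_congr rfl
    intro K hK
    simp only [mem_powerset] at hK
    have hiK : i ∉ K := fun h => (mem_erase.mp (hK h)).1 rfl
    have hcard : (insert i K).card = K.card + 1 := Finset.card_insert_of_notMem hiK
    have hv1 : v - indVec (insert i K) = (v - indVec K) - indVec {i} := by
      rw [indVec_insert_not_mem hiK]; abel
    have hv2 : (v - 1) + 1 - indVec (insert i K) = (v - indVec K) - indVec {i} := by
      funext x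
      simp only [indVec, Pi.sub_apply, Pi.add_apply, Pi.one_apply,
        mem_insert, mem_singleton]
      by_cases hx : x = i
      · subst hx; simp [hiK]
      · simp only [hx, false_or, if_false]
        split_ifs <;> ring
    have hv3 : v + 1 - indVec (insert i K) = (v - indVec K) + indVec (univ.erase i) := by
      funext x
      simp only [indVec, Pi.sub_apply, Pi.add_apply, Pi.one_apply,
        mem_insert, mem_singleton, mem_erase, mem_univ, and_true]
      by_cases hx : x = i
      · subst hx; simp [hiK]
      · simp only [hx, false_or, if_false]
        split_ifs <;> ring
    rw [hcard, hv1, hv2, hv3, pow_succ]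
    have := key (v - indVec K)
    linear_combination ((-1 : ℤ) ^ K.card) * this
  rw [hmain]
  ring
end

section
/- Let r ≥ 1 and let c : ℤ^r → ℤ satisfy the Gorenstein symmetry c(v) + c(δ - v - 1) = r for all v ∈ ℤ^r, where δ ∈ ℤ^r is fixed and 1 = (1,...,1). Then the coefficients p'(v) = (-1)^r ∑_{J ⊆ {1,...,r}} (-1)^{|J|} c(v - 1_J) satisfy p'(v) = (-1)^{r+1} · p'(δ - v), i.e., the functional equation P'(t) + (-1)^r t^δ P'(t^{-1}) = 0 holds coefficientwise. -/
/-- Combinatorial core of the Campillo–Delgado–Kiyek functional equation: if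
`c(v) + c(δ - v - 1) = r` for all `v` (Gorenstein symmetry), then the coefficients
`p'(v) = (-1)^r ∑_{J ⊆ I} (-1)^{|J|} c(v - 1_J)` satisfy `p'(v) = (-1)^{r+1} p'(δ - v)`. -/
theorem functional_equation_of_gorenstein_symmetry (r : ℕ) (hr : 1 ≤ r)
    (c : (Fin r → ℤ) → ℤ) (δ : Fin r → ℤ)
    (hsym : ∀ v : Fin r → ℤ, c v + c (δ - v - 1) = (r : ℤ))
    (v : Fin r → ℤ) :
    (-1 : ℤ) ^ r *
        ∑ J ∈ (Finset.univ : Finset (Fin r)).powerset,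
          (-1 : ℤ) ^ J.card * c (v - indVec J)
      = (-1 : ℤ) ^ (r + 1) *
          ((-1 : ℤ) ^ r *
            ∑ J ∈ (Finset.univ : Finset (Fin r)).powerset,
              (-1 : ℤ) ^ J.card * c ((δ - v) - indVec J)) := by
  have key : ∀ J : Finset (Fin r), c (v - indVec J) = (r : ℤ) - c ((δ - v) - indVec Jᶜ) := by
    intro J
    have h := hsym (v - indVec J)
    have he : δ - (v - indVec J) - 1 = (δ - v) - indVec Jᶜ := by
      funext i
      simp only [Pi.sub_apply, Pi.one_apply, indVec, Finset.mem_compl]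
      by_cases hi : i ∈ J <;> simp [hi] <;> ring
    rw [he] at h; linarith
  simp only [Finset.powerset_univ]
  have hzero : ∑ J : Finset (Fin r), (-1 : ℤ) ^ J.card = 0 := by
    have hne : (Finset.univ : Finset (Fin r)).Nonempty := by
      have : Nonempty (Fin r) := ⟨⟨0, hr⟩⟩
      exact Finset.univ_nonempty
    have := Finset.sum_powerset_neg_one_pow_card_of_nonempty hne
    rwa [Finset.powerset_univ] at this
  have hre : ∑ J : Finset (Fin r), (-1 : ℤ) ^ J.card * c ((δ - v) - indVec Jᶜ)
      = (-1 : ℤ) ^ r * ∑ J : Finset (Fin r), (-1 : ℤ) ^ J.card * c ((δ - v) - indVec J) := by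
    rw [Finset.mul_sum]
    apply Fintype.sum_equiv ((Function.Involutive.toPerm compl (fun J => compl_compl J)))
    intro J
    simp only [Function.Involutive.coe_toPerm, Equiv.Perm.coe_mul, Function.Involutive.toPerm]
    simp only [Equiv.coe_fn_mk, compl_compl]
    have hcard : (Jᶜ : Finset (Fin r)).card = r - J.card := by
      simp [Finset.card_compl]
    rw [hcard]
    have hle : J.card ≤ r := by simpa using Finset.card_le_card (Finset.subset_univ J)
    have h2 : ((-1 : ℤ) ^ J.card) * ((-1 : ℤ) ^ J.card) = 1 := by
      rw [← pow_add, neg_one_pow_eq_one_iff_even] <;> [exact ⟨J.card, rfl⟩; norm_num]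
    have h3 : (-1 : ℤ) ^ (r - J.card) * (-1 : ℤ) ^ J.card = (-1 : ℤ) ^ r := by
      rw [← pow_add]; congr 1; omega
    have this2 : (-1 : ℤ) ^ (r - J.card) = (-1 : ℤ) ^ r * (-1 : ℤ) ^ J.card := by
      linear_combination ((-1 : ℤ) ^ J.card) * h3 - ((-1 : ℤ) ^ (r - J.card)) * h2
    have hP : ((-1 : ℤ) ^ r) ^ 2 = 1 := by
      rw [← pow_mul, mul_comm, pow_mul]; norm_num
    rw [this2]
    linear_combination (-((-1 : ℤ) ^ J.card * c ((δ - v) - indVec Jᶜ))) * hP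
  have hS : ∑ J : Finset (Fin r), (-1 : ℤ) ^ J.card * c (v - indVec J)
      = - ((-1 : ℤ) ^ r * ∑ J : Finset (Fin r), (-1 : ℤ) ^ J.card * c ((δ - v) - indVec J)) := by
    calc ∑ J : Finset (Fin r), (-1 : ℤ) ^ J.card * c (v - indVec J)
        = ∑ J : Finset (Fin r), ((-1 : ℤ) ^ J.card * (r : ℤ)
            - (-1 : ℤ) ^ J.card * c ((δ - v) - indVec Jᶜ)) := by
          apply Finset.sum_congr rfl; intro J _; rw [key J]; ring
      _ = (∑ J : Finset (Fin r), (-1 : ℤ) ^ J.card) * (r : ℤ)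
            - ∑ J : Finset (Fin r), (-1 : ℤ) ^ J.card * c ((δ - v) - indVec Jᶜ) := by
          rw [Finset.sum_sub_distrib, Finset.sum_mul]
      _ = - ((-1 : ℤ) ^ r * ∑ J : Finset (Fin r), (-1 : ℤ) ^ J.card * c ((δ - v) - indVec J)) := by
          rw [hzero, hre]; ring
  rw [hS]
  have h2 : ((-1 : ℤ) ^ r) * ((-1 : ℤ) ^ r) = 1 := by
    rw [← pow_add, neg_one_pow_eq_one_iff_even] <;> [exact ⟨r, rfl⟩; norm_num]
  rw [pow_succ]
  nlinarith [h2]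
end

section
/- Let r ≥ 1 and let p : ℤ^r → ℤ have finite support and satisfy p(v) = (-1)^{r+1} p(δ - v) for all v (the functional equation of P'). Define p on ℤ^r via P(t) = P'(t)/(t_1⋯t_r - 1) formally; equivalently, let q : ℤ^r → ℤ satisfy p(v) = -q(v) + q(v - 1) with q of finite support. Then q(v) = (-1)^r q(τ - v) for all v, where τ = δ - 1. -/
/-- From the functional equation of `P'` to the functional equation of `P`: if
`p, q : ℤ^r → ℤ` have finite support, `p(v) = (-1)^{r+1} p(δ - v)` for all `v`, and
`p(v) = -q(v) + q(v - 1)` (i.e. `(t₁⋯t_r - 1)·Q = P'` coefficientwise), then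
`q(v) = (-1)^r q(τ - v)` for all `v`, where `τ = δ - 1`. -/
theorem functional_equation_of_P (r : ℕ) (hr : 1 ≤ r) (δ : Fin r → ℤ)
    (p q : (Fin r → ℤ) → ℤ)
    (hpfin : (Function.support p).Finite)
    (hqfin : (Function.support q).Finite)
    (hfe : ∀ v : Fin r → ℤ, p v = (-1 : ℤ) ^ (r + 1) * p (δ - v))
    (hpq : ∀ v : Fin r → ℤ, p v = -q v + q (v - 1)) :
    ∀ v : Fin r → ℤ, q v = (-1 : ℤ) ^ r * q ((δ - 1) - v) := by
  set c : ℤ := (-1) ^ r with hc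
  set h : (Fin r → ℤ) → ℤ := fun v => q v - c * q (δ - 1 - v) with hh
  have hs : (-1 : ℤ) ^ (r + 1) = -c := by rw [pow_succ]; ring
  have hstep : ∀ v : Fin r → ℤ, h (v - 1) = h v := by
    intro v
    have e1 := hpq v
    have e2 := hpq (δ - v)
    have e3 : p v = -c * p (δ - v) := by rw [hfe v, hs]
    have i1 : δ - 1 - (v - 1) = δ - v := by ring
    have i2 : δ - v - 1 = δ - 1 - v := by ring
    simp only [hh, i1]
    rw [i2] at e2
    linear_combination e3 - e1 - c * e2
  have hiter : ∀ (v : Fin r → ℤ) (n : ℕ), h (v - n • (1 : Fin r → ℤ)) = h v := by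
    intro v n
    induction n with
    | zero => simp
    | succ n ih =>
      have : v - (n + 1) • (1 : Fin r → ℤ) = (v - n • (1 : Fin r → ℤ)) - 1 := by
        rw [succ_nsmul]; ring
      rw [this, hstep, ih]
  have hhfin : (Function.support h).Finite := by
    have hsub : Function.support h ⊆
        Function.support q ∪ (fun v => δ - 1 - v) ⁻¹' Function.support q := by
      intro v hv
      by_contra hcon
      simp only [Set.mem_union, Set.mem_preimage, Function.mem_support, not_or, not_not] at hcon
      apply hv
      simp [hh, hcon.1, hcon.2]
    refine Set.Finite.subset (hqfin.union (Set.Finite.preimage ?_ hqfin)) hsub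
    exact Function.Injective.injOn fun a b hab => sub_right_injective hab
  intro v
  have hz : h v = 0 := by
    have hinj : Function.Injective (fun n : ℕ => v - n • (1 : Fin r → ℤ)) := by
      intro a b hab
      have := congrFun hab ⟨0, hr⟩
      simp only [Pi.sub_apply, Pi.smul_apply, Pi.one_apply, smul_eq_mul, nsmul_eq_mul, Pi.natCast_apply, mul_one] at this
      have h2 : (a : ℤ) = (b : ℤ) := by linarith
      exact_mod_cast h2
    have : ((fun n : ℕ => v - n • (1 : Fin r → ℤ)) ⁻¹' Function.support h).Finite :=
      Set.Finite.preimage hinj.injOn hhfin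
    obtain ⟨n, hn⟩ := Set.Infinite.nonempty ((Set.infinite_univ (α := ℕ)).diff this)
    have hn' : h (v - n • (1 : Fin r → ℤ)) = 0 := by
      by_contra hcon
      exact hn.2 hcon
    rw [hiter v n] at hn'
    exact hn'
  have := hz
  simp only [hh] at this
  linarith
end
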